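/- For vertex-disjoint digraphs G and H, the i-th critical ideal of the disjoint union G ⊔ H equals the ideal generated by the union over j = 0,…,i of the products I_j(G,X)·I_{i-j}(H,X), for all 1 ≤ i ≤ |V(G)| + |V(H)|. -/

import Mathlib

open MvPolynomial Matrix

noncomputable def glap {P : Type} [CommRing P] {V : Type} [Fintype V] [DecidableEq V]
    (m : V → V → ℕ) : Matrix V V (MvPolynomial V P) :=
  Matrix.of fun u v => if u = v then X u else - (m u v : MvPolynomial V P)

noncomputable def critIdeal {P : Type} [CommRing P] {V : Type} [Fintype V] [DecidableEq V]
    (m : V → V → ℕ) (i : ℕ) : Ideal (MvPolynomial V P) :=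
  Ideal.span { p | ∃ r s : Fin i → V, Function.Injective r ∧ Function.Injective s ∧
    p = ((glap (P := P) m).submatrix r s).det }

/-- The arc-multiplicity function of the disjoint union of two digraphs. -/
def disjUnion {a b : ℕ} (mG : Fin a → Fin a → ℕ) (mH : Fin b → Fin b → ℕ) :
    Fin a ⊕ Fin b → Fin a ⊕ Fin b → ℕ
  | Sum.inl x, Sum.inl y => mG x y
  | Sum.inr x, Sum.inr y => mH x y
  | _, _ => 0

/- ### Auxiliary lemmas -/

/-- A determinant vanishes if some set of rows is supported on a strictly smaller
set of columns.  Works over any commutative ring, via the Leibniz formula. -/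
lemma det_eq_zero_of_unbalanced {R : Type*} [CommRing R] {n : Type*} [Fintype n] [DecidableEq n]
    (M : Matrix n n R) (p q : n → Prop) [DecidablePred p] [DecidablePred q]
    (h0 : ∀ x y, p x → ¬ q y → M x y = 0)
    (hc : Fintype.card {y // q y} < Fintype.card {x // p x}) : M.det = 0 := by
  rw [Matrix.det_apply]
  refine Finset.sum_eq_zero fun σ _ => ?_
  obtain ⟨x, hpx, hqx⟩ : ∃ x, p (σ x) ∧ ¬ q x := by
    by_contra hcon
    push_neg at hcon
    have hle : Fintype.card {x // p x} ≤ Fintype.card {y // q y} := by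
      refine Fintype.card_le_of_injective
        (fun y => ⟨σ.symm y.1, hcon _ (by simpa using y.2)⟩) ?_
      intro y z h
      exact Subtype.ext (σ.symm.injective (congrArg Subtype.val h))
    omega
  have hz : ∏ i, M (σ i) i = 0 :=
    Finset.prod_eq_zero (f := fun i => M (σ i) i) (Finset.mem_univ x) (h0 _ _ hpx hqx)
  rw [hz, smul_zero]

/-- Split a fintype according to a decidable predicate. -/
noncomputable def splitEquiv {n : Type*} [Fintype n] [DecidableEq n]
    (p : n → Prop) [DecidablePred p] :
    Fin (Fintype.card {x // p x}) ⊕ Fin (Fintype.card {x // ¬ p x}) ≃ n :=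
  (Equiv.sumCongr (Fintype.equivFin _).symm (Fintype.equivFin _).symm).trans (Equiv.sumCompl p)

lemma splitEquiv_inl {n : Type*} [Fintype n] [DecidableEq n]
    (p : n → Prop) [DecidablePred p] (t : Fin (Fintype.card {x // p x})) :
    p (splitEquiv p (Sum.inl t)) := by
  simpa [splitEquiv] using ((Fintype.equivFin {x // p x}).symm t).2

lemma splitEquiv_inr {n : Type*} [Fintype n] [DecidableEq n]
    (p : n → Prop) [DecidablePred p] (t : Fin (Fintype.card {x // ¬ p x})) :
    ¬ p (splitEquiv p (Sum.inr t)) := by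
  simpa [splitEquiv] using ((Fintype.equivFin {x // ¬ p x}).symm t).2

/-- The generalized Laplacian of a disjoint union restricted to blocks. -/
lemma glap_block {P : Type} [CommRing P] {a b : ℕ}
    (mG : Fin a → Fin a → ℕ) (mH : Fin b → Fin b → ℕ)
    {n m : ℕ} (rA sA : Fin n → Fin a) (rB sB : Fin m → Fin b) :
    (glap (P := P) (disjUnion mG mH)).submatrix
        (Sum.elim (Sum.inl ∘ rA) (Sum.inr ∘ rB)) (Sum.elim (Sum.inl ∘ sA) (Sum.inr ∘ sB))
      = Matrix.fromBlocks
          (((glap (P := P) mG).submatrix rA sA).map (rename Sum.inl))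
          0 0
          (((glap (P := P) mH).submatrix rB sB).map (rename Sum.inr)) := by
  ext x y
  cases x <;> cases y <;>
    simp [glap, disjUnion, apply_ite (rename (R := P) Sum.inl),
      apply_ite (rename (R := P) Sum.inr)]

lemma det_elim {P : Type} [CommRing P] {a b : ℕ}
    (mG : Fin a → Fin a → ℕ) (mH : Fin b → Fin b → ℕ)
    {n m : ℕ} (rA sA : Fin n → Fin a) (rB sB : Fin m → Fin b) :
    ((glap (P := P) (disjUnion mG mH)).submatrix
        (Sum.elim (Sum.inl ∘ rA) (Sum.inr ∘ rB)) (Sum.elim (Sum.inl ∘ sA) (Sum.inr ∘ sB))).det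
      = rename Sum.inl (((glap (P := P) mG).submatrix rA sA).det)
        * rename Sum.inr (((glap (P := P) mH).submatrix rB sB).det) := by
  rw [glap_block, Matrix.det_fromBlocks_zero₁₂,
    AlgHom.map_det (rename Sum.inl), AlgHom.map_det (rename Sum.inr)]
  rfl

/-- If the determinant of a reindexing (by possibly different equivalences on rows and
columns) of a square matrix lies in an ideal, so does the determinant of the matrix. -/
lemma det_mem_of_submatrix {R : Type*} [CommRing R] {α β : Type*}
    [Fintype α] [DecidableEq α] [Fintype β] [DecidableEq β]
    (A : Matrix α α R) (e f : β ≃ α) (I : Ideal R)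
    (h : (A.submatrix e f).det ∈ I) : A.det ∈ I := by
  have h1 : A.submatrix e f = (A.submatrix f f).submatrix (e.trans f.symm : Equiv.Perm β) id := by
    ext x y
    simp [Matrix.submatrix_apply]
  have h2 : (A.submatrix e f).det
      = ((Equiv.Perm.sign (e.trans f.symm) : ℤ) : R) * A.det := by
    rw [h1, Matrix.det_permute, Matrix.det_submatrix_equiv_self]
  have hs : ((Equiv.Perm.sign (e.trans f.symm) : ℤ) : R)
      * ((Equiv.Perm.sign (e.trans f.symm) : ℤ) : R) = 1 := by
    rcases Int.units_eq_one_or (Equiv.Perm.sign (e.trans f.symm)) with hu | hu <;> simp [hu]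
  have h3 : A.det = ((Equiv.Perm.sign (e.trans f.symm) : ℤ) : R) * (A.submatrix e f).det := by
    rw [h2, ← mul_assoc, hs, one_mul]
  rw [h3]
  exact Ideal.mul_mem_left _ _ h

/-- For vertex-disjoint digraphs `G` and `H`, the `i`-th critical ideal of `G ⊔ H` is the
ideal generated by the union over `j = 0, …, i` of the products `I_j(G) · I_{i-j}(H)`
(viewing the two critical ideals inside the big polynomial ring via renaming). -/
theorem critIdeal_disjUnion {P : Type} [CommRing P] {a b : ℕ}
    (mG : Fin a → Fin a → ℕ) (mH : Fin b → Fin b → ℕ) (i : ℕ)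
    (h1 : 1 ≤ i) (hi : i ≤ a + b) :
    critIdeal (P := P) (disjUnion mG mH) i
      = ⨆ j ∈ Finset.range (i + 1),
          (Ideal.map (MvPolynomial.rename (Sum.inl : Fin a → Fin a ⊕ Fin b) :
              MvPolynomial (Fin a) P →ₐ[P] MvPolynomial (Fin a ⊕ Fin b) P).toRingHom
            (critIdeal (P := P) mG j)) *
          (Ideal.map (MvPolynomial.rename (Sum.inr : Fin b → Fin a ⊕ Fin b) :
              MvPolynomial (Fin b) P →ₐ[P] MvPolynomial (Fin a ⊕ Fin b) P).toRingHom
            (critIdeal (P := P) mH (i - j))) := by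
  apply le_antisymm
  · rw [critIdeal, Ideal.span_le]
    rintro p ⟨r, s, hr, hs, rfl⟩
    simp only [SetLike.mem_coe]
    set M := (glap (P := P) (disjUnion mG mH)).submatrix r s with hM
    set p' : Fin i → Prop := fun x => (r x).isLeft with hp'
    set q' : Fin i → Prop := fun x => (s x).isLeft with hq'
    set k := Fintype.card {x // p' x} with hk
    set k' := Fintype.card {x // ¬ p' x} with hk'
    set l := Fintype.card {x // q' x} with hl
    set l' := Fintype.card {x // ¬ q' x} with hl'
    have hki : k ≤ i := by
      simpa using Fintype.card_subtype_le p'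
    have hli : l ≤ i := by
      simpa using Fintype.card_subtype_le q'
    have hk'i : k' = i - k := by
      rw [hk', Fintype.card_subtype_compl, Fintype.card_fin, hk]
    have hl'i : l' = i - l := by
      rw [hl', Fintype.card_subtype_compl, Fintype.card_fin, hl]
    have hcardR : Fintype.card {x // (r x).isRight} = k' :=
      Fintype.card_congr (Equiv.subtypeEquivRight (fun x => Sum.not_isLeft.symm))
    have hcardS : Fintype.card {x // (s x).isRight} = l' :=
      Fintype.card_congr (Equiv.subtypeEquivRight (fun x => Sum.not_isLeft.symm))
    rcases lt_trichotomy k l with hkl | hkl | hkl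
    · -- more "left" columns than rows : the right-rows block is too big
      have hz : M.det = 0 := by
        refine det_eq_zero_of_unbalanced M (fun x => (r x).isRight)
          (fun y => (s y).isRight) ?_ ?_
        · intro x y hx hy
          obtain ⟨u, hu⟩ := Sum.isRight_iff.mp hx
          obtain ⟨v, hv⟩ := Sum.isLeft_iff.mp (Sum.not_isRight.mp hy)
          simp [hM, glap, hu, hv, disjUnion]
        · rw [hcardR, hcardS]; omega
      rw [hz]
      exact zero_mem _
    · -- balanced case
      let e : Fin k ⊕ Fin k' ≃ Fin i := splitEquiv p'
      let f : Fin k ⊕ Fin k' ≃ Fin i :=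
        (Equiv.sumCongr (finCongr hkl) (finCongr (by omega : k' = l'))).trans (splitEquiv q')
      have hfe : ∀ t : Fin k, q' (f (Sum.inl t)) := fun t => splitEquiv_inl q' _
      have hfe' : ∀ t : Fin k', ¬ q' (f (Sum.inr t)) := fun t => splitEquiv_inr q' _
      let gr : Fin k → Fin a := fun t => (r (e (Sum.inl t))).getLeft (splitEquiv_inl p' t)
      let gr' : Fin k' → Fin b := fun t =>
        (r (e (Sum.inr t))).getRight (Sum.not_isLeft.mp (splitEquiv_inr p' t))
      let gs : Fin k → Fin a := fun t => (s (f (Sum.inl t))).getLeft (hfe t)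
      let gs' : Fin k' → Fin b := fun t =>
        (s (f (Sum.inr t))).getRight (Sum.not_isLeft.mp (hfe' t))
      have hre : r ∘ e = Sum.elim (Sum.inl ∘ gr) (Sum.inr ∘ gr') := by
        funext x
        rcases x with t | t
        · exact (Sum.inl_getLeft _ _).symm
        · exact (Sum.inr_getRight _ _).symm
      have hse : s ∘ f = Sum.elim (Sum.inl ∘ gs) (Sum.inr ∘ gs') := by
        funext x
        rcases x with t | t
        · exact (Sum.inl_getLeft _ _).symm
        · exact (Sum.inr_getRight _ _).symm
      have grInj : Function.Injective gr := by
        intro t t' h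
        have h2 : Sum.inl (gr t) = Sum.inl (gr t') := congrArg (Sum.inl : Fin a → Fin a ⊕ Fin b) h
        rw [Sum.inl_getLeft, Sum.inl_getLeft] at h2
        exact Sum.inl_injective (e.injective (hr h2))
      have gr'Inj : Function.Injective gr' := by
        intro t t' h
        have h2 : Sum.inr (gr' t) = Sum.inr (gr' t') := congrArg (Sum.inr : Fin b → Fin a ⊕ Fin b) h
        rw [Sum.inr_getRight, Sum.inr_getRight] at h2
        exact Sum.inr_injective (e.injective (hr h2))
      have gsInj : Function.Injective gs := by
        intro t t' h
        have h2 : Sum.inl (gs t) = Sum.inl (gs t') := congrArg (Sum.inl : Fin a → Fin a ⊕ Fin b) h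
        rw [Sum.inl_getLeft, Sum.inl_getLeft] at h2
        exact Sum.inl_injective (f.injective (hs h2))
      have gs'Inj : Function.Injective gs' := by
        intro t t' h
        have h2 : Sum.inr (gs' t) = Sum.inr (gs' t') := congrArg (Sum.inr : Fin b → Fin a ⊕ Fin b) h
        rw [Sum.inr_getRight, Sum.inr_getRight] at h2
        exact Sum.inr_injective (f.injective (hs h2))
      refine det_mem_of_submatrix M e f _ ?_
      have hMef : M.submatrix e f
          = (glap (P := P) (disjUnion mG mH)).submatrix (r ∘ e) (s ∘ f) := by
        rw [hM, Matrix.submatrix_submatrix]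
      rw [hMef, hre, hse, det_elim]
      refine Submodule.mem_iSup_of_mem k ?_
      refine Submodule.mem_iSup_of_mem (Finset.mem_range.mpr (by omega)) ?_
      refine Ideal.mul_mem_mul ?_ ?_
      · exact Ideal.mem_map_of_mem _
          (Ideal.subset_span ⟨gr, gs, grInj, gsInj, rfl⟩)
      · have key : ∀ (c : ℕ), c = i - k → ∀ (rr ss : Fin c → Fin b),
            Function.Injective rr → Function.Injective ss →
            (((glap (P := P) mH).submatrix rr ss)).det ∈ critIdeal (P := P) mH (i - k) := by
          rintro c rfl rr ss hrr hss
          exact Ideal.subset_span ⟨rr, ss, hrr, hss, rfl⟩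
        exact Ideal.mem_map_of_mem _ (key k' hk'i gr' gs' gr'Inj gs'Inj)
    · -- more "left" rows than columns : the left-rows block is too big
      have hz : M.det = 0 := by
        refine det_eq_zero_of_unbalanced M (fun x => (r x).isLeft)
          (fun y => (s y).isLeft) ?_ ?_
        · intro x y hx hy
          obtain ⟨u, hu⟩ := Sum.isLeft_iff.mp hx
          obtain ⟨v, hv⟩ := Sum.isRight_iff.mp (Sum.not_isLeft.mp hy)
          simp [hM, glap, hu, hv, disjUnion]
        · exact hkl
      rw [hz]
      exact zero_mem _
  · refine iSup_le fun j => iSup_le fun hj => ?_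
    have hj' : j ≤ i := by
      have := Finset.mem_range.mp hj
      omega
    rw [critIdeal, critIdeal, critIdeal, Ideal.map_span, Ideal.map_span, Ideal.span_mul_span',
      Ideal.span_le]
    rintro p hp
    rw [Set.mem_mul] at hp
    obtain ⟨p1, hp1, p2, hp2, rfl⟩ := hp
    obtain ⟨q1, ⟨rA, sA, hrA, hsA, rfl⟩, rfl⟩ := hp1
    obtain ⟨q2, ⟨rB, sB, hrB, hsB, rfl⟩, rfl⟩ := hp2
    simp only [SetLike.mem_coe, AlgHom.toRingHom_eq_coe, RingHom.coe_coe]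
    let φ : Fin j ⊕ Fin (i - j) ≃ Fin i :=
      finSumFinEquiv.trans (finCongr (Nat.add_sub_cancel' hj'))
    let r : Fin i → Fin a ⊕ Fin b := Sum.elim (Sum.inl ∘ rA) (Sum.inr ∘ rB) ∘ φ.symm
    let s : Fin i → Fin a ⊕ Fin b := Sum.elim (Sum.inl ∘ sA) (Sum.inr ∘ sB) ∘ φ.symm
    have hrInj : Function.Injective r :=
      (Function.Injective.sumElim (Sum.inl_injective.comp hrA)
        (Sum.inr_injective.comp hrB) (fun x y => by simp)).comp φ.symm.injective
    have hsInj : Function.Injective s :=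
      (Function.Injective.sumElim (Sum.inl_injective.comp hsA)
        (Sum.inr_injective.comp hsB) (fun x y => by simp)).comp φ.symm.injective
    refine Ideal.subset_span ⟨r, s, hrInj, hsInj, ?_⟩
    have hsub : (glap (P := P) (disjUnion mG mH)).submatrix r s
        = ((glap (P := P) (disjUnion mG mH)).submatrix
            (Sum.elim (Sum.inl ∘ rA) (Sum.inr ∘ rB))
            (Sum.elim (Sum.inl ∘ sA) (Sum.inr ∘ sB))).submatrix φ.symm φ.symm := by
      rw [Matrix.submatrix_submatrix]
    rw [hsub, Matrix.det_submatrix_equiv_self, det_elim]
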